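/- arXiv:2405.02221 — 2 statements merged into one kernel-verified Lean document; each statement's English description precedes it below -/
import Mathlib

section
/- For s > d/2 and any k ∈ [[N]]^d, the tail sum ∑_{ℓ ∈ Z^d∖{0}} (1 + |k + ℓN|^{2s})^{−1} is bounded by c_{d,s} N^{−2s}, where c_{d,s} = (4d)^s ∑_{ℓ ∈ Z^d∖{0}} |ℓ|^{−2s} < ∞. -/
open scoped BigOperators
open MeasureTheory Finset Filter

noncomputable section

/-- The symmetric frequency index set `[[N]]`, with `N` elements. -/
def symmSet (N : ℕ) : Finset ℤ := Finset.Icc (-((N / 2 : ℕ) : ℤ)) (((N - 1) / 2 : ℕ) : ℤ)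

/-- The symmetric frequency index set `[[N]]^d`. -/
def symmPi (d N : ℕ) : Finset (Fin d → ℤ) := Fintype.piFinset fun _ => symmSet N

/-- Grid point `x_n = n / N` on the torus, for `n ∈ [N]^d`. -/
def gridPt (d N : ℕ) (n : Fin d → Fin N) : Fin d → ℝ := fun i => (n i : ℝ) / (N : ℝ)

/-- The unit cube `[0,1]^d`, a fundamental domain for the torus `T^d`. -/
def cube (d : ℕ) : Set (Fin d → ℝ) := Set.univ.pi fun _ => Set.Icc (0 : ℝ) 1

/-- The complex exponential `e^{2 π i ⟨k, x⟩}`. -/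
def fexp (d : ℕ) (k : Fin d → ℤ) (x : Fin d → ℝ) : ℂ :=
  Complex.exp (2 * (Real.pi : ℂ) * Complex.I * ∑ i, (k i : ℂ) * (x i : ℂ))

/-- Discrete Fourier transform of grid values: `DFT(v)(k) = N^{-d} ∑_n v(x_n) e^{-2πi⟨k,x_n⟩}`. -/
def dft (d N : ℕ) (v : (Fin d → Fin N) → ℂ) (k : Fin d → ℤ) : ℂ :=
  ((N : ℂ) ^ d)⁻¹ * ∑ n : Fin d → Fin N, v n * fexp d (-k) (gridPt d N n)

/-- Continuous Fourier coefficient `v̂(k) = ∫_{T^d} v(x) e^{-2πi⟨k,x⟩} dx`. -/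
def fcoef (d : ℕ) (f : (Fin d → ℝ) → ℂ) (k : Fin d → ℤ) : ℂ :=
  ∫ x in cube d, f x * fexp d (-k) x

/-- Squared Euclidean norm `|k|²` of an integer vector. -/
def sqnormZ (d : ℕ) (k : Fin d → ℤ) : ℝ := ∑ i, ((k i : ℝ)) ^ 2

lemma summable_max_abs_int {p : ℝ} (hp : 1 < p) :
    Summable fun m : ℤ => (max 1 |(m : ℝ)|) ^ (-p) := by
  have h1 : Summable fun m : ℤ => |(m : ℝ)| ^ (-p) := Real.summable_abs_int_rpow hp
  have h2 : Summable fun m : ℤ => Set.indicator {(0 : ℤ)} (fun _ => (1 : ℝ)) m := by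
    apply summable_of_ne_finset_zero (s := {(0 : ℤ)})
    intro b hb
    simp only [Set.indicator_apply, Set.mem_singleton_iff]
    rw [if_neg (by simpa using hb)]
  refine (h1.add h2).congr fun m => ?_
  by_cases hm : m = 0
  · subst hm; simp [Real.zero_rpow (by linarith : -p ≠ 0)]
  · have : (1 : ℝ) ≤ |(m : ℝ)| := by
      rw [← Int.cast_abs]; exact_mod_cast Int.one_le_abs hm
    simp [Set.indicator_apply, hm, max_eq_right this]

lemma summable_prod_max (p : ℝ) (hp : 1 < p) (d : ℕ) :
    Summable fun ℓ : Fin d → ℤ => ∏ i, (max 1 |(ℓ i : ℝ)|) ^ (-p) := by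
  induction d with
  | zero => exact (hasSum_fintype _).summable
  | succ n ih =>
    have h := (summable_max_abs_int hp).mul_of_nonneg ih
      (fun m => Real.rpow_nonneg (le_trans zero_le_one (le_max_left _ _)) _)
      (fun ℓ => Finset.prod_nonneg fun i _ =>
        Real.rpow_nonneg (le_trans zero_le_one (le_max_left _ _)) _)
    have := ((Fin.consEquiv (fun _ : Fin (n+1) => ℤ)).symm.summable_iff (f := fun x : ℤ × (Fin n → ℤ) =>
      (max 1 |(x.1 : ℝ)|) ^ (-p) * ∏ i, (max 1 |(x.2 i : ℝ)|) ^ (-p))).mpr h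
    refine this.congr fun ℓ => ?_
    simp [Fin.prod_univ_succ, Fin.tail]

lemma sqnormZ_nonneg (d : ℕ) (ℓ : Fin d → ℤ) : 0 ≤ sqnormZ d ℓ :=
  Finset.sum_nonneg fun i _ => sq_nonneg _

lemma one_le_sqnormZ {d : ℕ} {ℓ : Fin d → ℤ} (h : ℓ ≠ 0) : 1 ≤ sqnormZ d ℓ := by
  obtain ⟨i, hi⟩ := Function.ne_iff.mp h
  have h1 : (1 : ℝ) ≤ ((ℓ i : ℝ)) ^ 2 := by
    have := Int.one_le_abs (by simpa using hi)
    have : (1 : ℝ) ≤ |(ℓ i : ℝ)| := by rw [← Int.cast_abs]; exact_mod_cast this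
    calc (1:ℝ) = 1 ^ 2 := by norm_num
      _ ≤ |(ℓ i : ℝ)| ^ 2 := by exact pow_le_pow_left₀ zero_le_one this 2
      _ = ((ℓ i : ℝ)) ^ 2 := sq_abs _
  exact h1.trans (Finset.single_le_sum (fun j _ => sq_nonneg ((ℓ j : ℝ))) (mem_univ i))

lemma sq_le_sqnormZ {d : ℕ} (ℓ : Fin d → ℤ) (i : Fin d) :
    ((ℓ i : ℝ)) ^ 2 ≤ sqnormZ d ℓ :=
  Finset.single_le_sum (fun j _ => sq_nonneg ((ℓ j : ℝ))) (mem_univ i)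

/-- comparison: `(|ℓ|²ˢ)⁻¹ ≤ ∏ max(1,|ℓᵢ|)^(-2s/d)` for `ℓ ≠ 0`. -/
lemma inv_sqnorm_le_prod {d : ℕ} (hd : 0 < d) {s : ℝ} (hs0 : 0 < s)
    {ℓ : Fin d → ℤ} (h : ℓ ≠ 0) :
    (sqnormZ d ℓ ^ s)⁻¹ ≤ ∏ i, (max 1 |(ℓ i : ℝ)|) ^ (-(2 * s / d)) := by
  set B := sqnormZ d ℓ with hBdef
  have hB1 : 1 ≤ B := one_le_sqnormZ h
  have hB0 : 0 < B := lt_of_lt_of_le one_pos hB1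
  have hP0 : ∀ i : Fin d, (0:ℝ) < max 1 |(ℓ i : ℝ)| := fun i =>
    lt_of_lt_of_le one_pos (le_max_left _ _)
  have hprodpos : (0:ℝ) < ∏ i, (max 1 |(ℓ i : ℝ)|) :=
    Finset.prod_pos fun i _ => hP0 i
  -- each factor ≤ √B
  have hfac : ∀ i : Fin d, max 1 |(ℓ i : ℝ)| ≤ Real.sqrt B := by
    intro i
    rw [max_le_iff]
    constructor
    · rw [show (1:ℝ) = Real.sqrt 1 by simp]
      exact Real.sqrt_le_sqrt hB1
    · rw [← Real.sqrt_sq (abs_nonneg ((ℓ i:ℝ)))]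
      exact Real.sqrt_le_sqrt (by rw [sq_abs]; exact sq_le_sqnormZ ℓ i)
  have hprod : (∏ i, (max 1 |(ℓ i : ℝ)|)) ≤ B ^ ((d : ℝ) / 2) := by
    calc (∏ i, (max 1 |(ℓ i : ℝ)|)) ≤ ∏ _i : Fin d, Real.sqrt B :=
          Finset.prod_le_prod (fun i _ => (hP0 i).le) (fun i _ => hfac i)
      _ = Real.sqrt B ^ (d : ℕ) := by rw [Finset.prod_const, Finset.card_univ, Fintype.card_fin]
      _ = B ^ ((d : ℝ) / 2) := by
          rw [Real.sqrt_eq_rpow, ← Real.rpow_natCast (B ^ ((1:ℝ)/2)) d,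
            ← Real.rpow_mul hB0.le]
          ring_nf
  -- raise to power 2s/d
  have hq0 : (0:ℝ) < 2 * s / d := by positivity
  have key : (∏ i, (max 1 |(ℓ i : ℝ)|)) ^ (2 * s / d) ≤ B ^ s := by
    calc (∏ i, (max 1 |(ℓ i : ℝ)|)) ^ (2 * s / d)
        ≤ (B ^ ((d : ℝ) / 2)) ^ (2 * s / d) :=
          Real.rpow_le_rpow hprodpos.le hprod hq0.le
      _ = B ^ s := by
          rw [← Real.rpow_mul hB0.le]
          congr 1
          field_simp
  have hBs : (0:ℝ) < B ^ s := Real.rpow_pos_of_pos hB0 s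
  have := inv_anti₀ (Real.rpow_pos_of_pos hprodpos _) key
  calc (B ^ s)⁻¹ ≤ ((∏ i, (max 1 |(ℓ i : ℝ)|)) ^ (2 * s / d))⁻¹ := this
    _ = ∏ i, (max 1 |(ℓ i : ℝ)|) ^ (-(2 * s / d)) := by
        rw [← Real.rpow_neg hprodpos.le, ← Real.finset_prod_rpow _ _ (fun i _ => (hP0 i).le)]

/-- Tail sum bound: for `s > d/2` and `k ∈ [[N]]^d`, the lattice sum
`∑_{ℓ ≠ 0} (1 + |k + ℓN|^{2s})⁻¹` is finite and bounded by `c_{d,s} N^{-2s}` with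
`c_{d,s} = (4d)^s ∑_{ℓ ≠ 0} |ℓ|^{-2s}` (note `|k+ℓN|^{2s} = (|k+ℓN|²)^s`). -/
theorem aliasing_tail_sum_bound (d N : ℕ) (hd : 0 < d) (hN : 1 < N)
    (s : ℝ) (hs : s > (d : ℝ) / 2) (k : Fin d → ℤ) (hk : k ∈ symmPi d N) :
    (Summable fun ℓ : {ℓ : Fin d → ℤ // ℓ ≠ 0} => (sqnormZ d ℓ.1 ^ s)⁻¹) ∧
    (∑' ℓ : {ℓ : Fin d → ℤ // ℓ ≠ 0},
        (1 + sqnormZ d (k + fun i => ℓ.1 i * (N : ℤ)) ^ s)⁻¹)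
      ≤ ((4 * (d : ℝ)) ^ s *
          ∑' ℓ : {ℓ : Fin d → ℤ // ℓ ≠ 0}, (sqnormZ d ℓ.1 ^ s)⁻¹) *
        (N : ℝ) ^ (-(2 * s)) := by
  have hd' : (0:ℝ) < d := by exact_mod_cast hd
  have hs0 : 0 < s := lt_of_le_of_lt (by positivity) hs
  have hN0 : (0:ℝ) < N := by positivity
  have hp : (1:ℝ) < 2 * s / d := by
    rw [lt_div_iff₀ hd']; linarith
  -- Part 1: summability
  have hsum1 : Summable fun ℓ : {ℓ : Fin d → ℤ // ℓ ≠ 0} => (sqnormZ d ℓ.1 ^ s)⁻¹ := by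
    refine Summable.of_nonneg_of_le (fun ℓ => ?_) (fun ℓ => inv_sqnorm_le_prod hd hs0 ℓ.2)
      ((summable_prod_max _ hp d).subtype _)
    have := Real.rpow_pos_of_pos (lt_of_lt_of_le one_pos (one_le_sqnormZ ℓ.2)) s
    positivity
  refine ⟨hsum1, ?_⟩
  -- bound on |k i|
  have hki : ∀ i, |(k i : ℝ)| ≤ (N : ℝ) / 2 := by
    intro i
    have hk' : k i ∈ symmSet N := by
      rw [symmPi, Fintype.mem_piFinset] at hk; exact hk i
    rw [symmSet, Finset.mem_Icc] at hk'
    have h1 : ((N / 2 : ℕ) : ℝ) ≤ (N : ℝ) / 2 := by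
      exact_mod_cast Nat.cast_div_le
    have h2 : (((N - 1) / 2 : ℕ) : ℝ) ≤ (N : ℝ) / 2 := by
      calc (((N - 1) / 2 : ℕ) : ℝ) ≤ ((N - 1 : ℕ) : ℝ) / 2 := by exact_mod_cast Nat.cast_div_le
        _ ≤ (N : ℝ) / 2 := by
            have : ((N - 1 : ℕ) : ℝ) ≤ (N : ℝ) := by
              exact_mod_cast Nat.sub_le N 1
            linarith
    rw [abs_le]
    constructor
    · have t1 : -(((N / 2 : ℕ)) : ℝ) ≤ ((k i : ℤ) : ℝ) := by exact_mod_cast hk'.1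
      linarith
    · have t2 : ((k i : ℤ) : ℝ) ≤ ((((N - 1) / 2 : ℕ) : ℤ) : ℝ) := by
        exact_mod_cast hk'.2
      rw [Int.cast_natCast] at t2
      linarith
  -- componentwise bound
  have hcomp : ∀ (ℓ : Fin d → ℤ), ℓ ≠ 0 →
      (N : ℝ)^2 / 4 * sqnormZ d ℓ ≤ sqnormZ d (k + fun i => ℓ i * (N : ℤ)) := by
    intro ℓ hℓ
    rw [sqnormZ, sqnormZ, Finset.mul_sum]
    refine Finset.sum_le_sum fun i _ => ?_
    simp only [Pi.add_apply, Int.cast_add, Int.cast_mul, Int.cast_natCast]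
    set a := (k i : ℝ)
    set b := (ℓ i : ℝ)
    by_cases hb : ℓ i = 0
    · have : b = 0 := by simp [b, hb]
      rw [this]; simp [sq_nonneg]
    · have hb1 : (1:ℝ) ≤ |b| := by
        rw [show b = ((ℓ i : ℤ) : ℝ) from rfl, ← Int.cast_abs]
        exact_mod_cast Int.one_le_abs hb
      have ha := hki i
      rw [abs_le] at ha
      rcases abs_cases b with ⟨hb2, _⟩ | ⟨hb2, _⟩
      · -- b ≥ 1
        have hb1' : (1:ℝ) ≤ b := by linarith [hb1, hb2.symm ▸ hb1]
        nlinarith [mul_nonneg (by nlinarith : (0:ℝ) ≤ a + b * N / 2)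
          (by nlinarith : (0:ℝ) ≤ a + 3 * b * N / 2)]
      · -- b ≤ -1
        have hb1' : b ≤ -1 := by linarith
        nlinarith [mul_nonneg (by nlinarith : (0:ℝ) ≤ -(a + b * N / 2))
          (by nlinarith : (0:ℝ) ≤ -(a + 3 * b * N / 2))]
  -- per-term bound
  have key : ∀ ℓ : {ℓ : Fin d → ℤ // ℓ ≠ 0},
      (1 + sqnormZ d (k + fun i => ℓ.1 i * (N : ℤ)) ^ s)⁻¹
        ≤ ((4 * (d : ℝ)) ^ s * (N : ℝ) ^ (-(2 * s))) * (sqnormZ d ℓ.1 ^ s)⁻¹ := by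
    rintro ⟨ℓ, hℓ⟩
    set A := sqnormZ d (k + fun i => ℓ i * (N : ℤ))
    set B := sqnormZ d ℓ with hBdef
    have hB0 : (0:ℝ) < B := lt_of_lt_of_le one_pos (one_le_sqnormZ hℓ)
    have hc0 : (0:ℝ) < (N:ℝ)^2 / 4 := by positivity
    have hA : (N : ℝ)^2 / 4 * B ≤ A := hcomp ℓ hℓ
    have hAs : ((N:ℝ)^2/4) ^ s * B ^ s ≤ A ^ s := by
      rw [← Real.mul_rpow hc0.le hB0.le]
      exact Real.rpow_le_rpow (by positivity) hA hs0.le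
    have hpos : (0:ℝ) < ((N:ℝ)^2/4) ^ s * B ^ s :=
      mul_pos (Real.rpow_pos_of_pos hc0 s) (Real.rpow_pos_of_pos hB0 s)
    have step1 : (1 + A ^ s)⁻¹ ≤ (((N:ℝ)^2/4) ^ s * B ^ s)⁻¹ :=
      inv_anti₀ hpos (hAs.trans (le_add_of_nonneg_left zero_le_one))
    have e : ((N:ℝ)^2/4) ^ s = (4:ℝ) ^ (-s) * (N : ℝ) ^ (2 * s) := by
      rw [div_eq_mul_inv, Real.mul_rpow (by positivity) (by positivity),
        ← Real.rpow_natCast (N : ℝ) 2, ← Real.rpow_mul hN0.le,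
        Real.inv_rpow (by norm_num : (0:ℝ) ≤ 4), ← Real.rpow_neg (by norm_num : (0:ℝ) ≤ 4)]
      push_cast
      ring
    have h4s : (0:ℝ) < (4:ℝ) ^ s := Real.rpow_pos_of_pos (by norm_num) s
    have hNs : (0:ℝ) < (N:ℝ) ^ (2 * s) := Real.rpow_pos_of_pos hN0 _
    have hBs : (0:ℝ) < B ^ s := Real.rpow_pos_of_pos hB0 s
    have step2 : (((N:ℝ)^2/4) ^ s * B ^ s)⁻¹
        = (4:ℝ) ^ s * (N : ℝ) ^ (-(2 * s)) * (B ^ s)⁻¹ := by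
      rw [e, Real.rpow_neg hN0.le (2 * s), Real.rpow_neg (by norm_num : (0:ℝ) ≤ 4) s]
      field_simp
    have step3 : (4:ℝ) ^ s ≤ (4 * (d : ℝ)) ^ s := by
      apply Real.rpow_le_rpow (by norm_num) _ hs0.le
      have hd1 : (1:ℝ) ≤ (d : ℝ) := by exact_mod_cast hd
      nlinarith [hd1]
    calc (1 + A ^ s)⁻¹ ≤ (((N:ℝ)^2/4) ^ s * B ^ s)⁻¹ := step1
      _ = (4:ℝ) ^ s * (N : ℝ) ^ (-(2 * s)) * (B ^ s)⁻¹ := step2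
      _ ≤ (4 * (d : ℝ)) ^ s * (N : ℝ) ^ (-(2 * s)) * (B ^ s)⁻¹ := by
          have hX : (0:ℝ) ≤ (N : ℝ) ^ (-(2 * s)) := (Real.rpow_pos_of_pos hN0 _).le
          have hY : (0:ℝ) ≤ (B ^ s)⁻¹ := (inv_pos.mpr hBs).le
          exact mul_le_mul_of_nonneg_right
            (mul_le_mul_of_nonneg_right step3 hX) hY
      _ = ((4 * (d : ℝ)) ^ s * (N : ℝ) ^ (-(2 * s))) * (B ^ s)⁻¹ := by ring
  -- conclude
  have hsum2 : Summable fun ℓ : {ℓ : Fin d → ℤ // ℓ ≠ 0} =>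
      ((4 * (d : ℝ)) ^ s * (N : ℝ) ^ (-(2 * s))) * (sqnormZ d ℓ.1 ^ s)⁻¹ :=
    hsum1.mul_left _
  have hnn : ∀ ℓ : {ℓ : Fin d → ℤ // ℓ ≠ 0},
      (0:ℝ) ≤ (1 + sqnormZ d (k + fun i => ℓ.1 i * (N : ℤ)) ^ s)⁻¹ := by
    intro ℓ
    have h1 := Real.rpow_nonneg (sqnormZ_nonneg d (k + fun i => ℓ.1 i * (N : ℤ))) s
    positivity
  have hL : Summable fun ℓ : {ℓ : Fin d → ℤ // ℓ ≠ 0} =>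
      (1 + sqnormZ d (k + fun i => ℓ.1 i * (N : ℤ)) ^ s)⁻¹ :=
    Summable.of_nonneg_of_le hnn key hsum2
  calc (∑' ℓ : {ℓ : Fin d → ℤ // ℓ ≠ 0},
        (1 + sqnormZ d (k + fun i => ℓ.1 i * (N : ℤ)) ^ s)⁻¹)
      ≤ ∑' ℓ : {ℓ : Fin d → ℤ // ℓ ≠ 0},
        ((4 * (d : ℝ)) ^ s * (N : ℝ) ^ (-(2 * s))) * (sqnormZ d ℓ.1 ^ s)⁻¹ :=
        hL.tsum_le_tsum key hsum2
    _ = ((4 * (d : ℝ)) ^ s * (N : ℝ) ^ (-(2 * s))) *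
        ∑' ℓ : {ℓ : Fin d → ℤ // ℓ ≠ 0}, (sqnormZ d ℓ.1 ^ s)⁻¹ := tsum_mul_left
    _ = ((4 * (d : ℝ)) ^ s *
          ∑' ℓ : {ℓ : Fin d → ℤ // ℓ ≠ 0}, (sqnormZ d ℓ.1 ^ s)⁻¹) *
        (N : ℝ) ^ (-(2 * s)) := by ring

end
end

section
/- (Sup-norm stability of an FNO layer.) Let σ be B-Lipschitz, W a matrix with ‖W‖₂ ≤ M, b a vector with |b| ≤ M, and K the kernel operator (Kv)(x) = ∑_{k ∈ [[K]]^d} P^{(k)} v̂(k) e^{2πi⟨k,x⟩} with (∑_k ‖P^{(k)}‖_F²)^{1/2} ≤ M. Then the output v' = σ(Wv + Kv + b) satisfies ‖v'‖_∞ ≤ σ* + BM(1 + ‖v‖_∞ + K^{d/2}‖v‖_{L²(T^d)}), where σ* = max{|σ(0)|, 1} and v̂(k) are the Fourier coefficients of v. -/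
open scoped BigOperators
open MeasureTheory Finset Filter

noncomputable section

/- ### Auxiliary lemmas -/

lemma norm_fexp (d : ℕ) (k : Fin d → ℤ) (x : Fin d → ℝ) : ‖fexp d k x‖ = 1 := by
  have h1 : (∑ i, (k i : ℂ) * (x i : ℂ)) = (((∑ i, (k i : ℝ) * x i : ℝ)) : ℂ) := by
    push_cast; ring
  have h2 : 2 * (Real.pi : ℂ) * Complex.I * (((∑ i, (k i : ℝ) * x i : ℝ)) : ℂ)
      = ((2 * Real.pi * (∑ i, (k i : ℝ) * x i) : ℝ) : ℂ) * Complex.I := by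
    push_cast; ring
  rw [fexp, h1, h2, Complex.norm_exp_ofReal_mul_I]

lemma volume_cube (d : ℕ) : volume (cube d) = 1 := by
  rw [cube, volume_pi_pi]; simp [Real.volume_Icc]

lemma card_symmSet (K : ℕ) (hK : 1 ≤ K) : (symmSet K).card = K := by
  rw [symmSet, Int.card_Icc]; omega

lemma card_symmPi (d K : ℕ) (hK : 1 ≤ K) : (symmPi d K).card = K ^ d := by
  simp [symmPi, Fintype.card_piFinset, card_symmSet K hK]

lemma sqrt_sum_sq_mono {m : ℕ} {a c : Fin m → ℝ} (h : ∀ j, |a j| ≤ c j) :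
    Real.sqrt (∑ j, a j ^ 2) ≤ Real.sqrt (∑ j, c j ^ 2) := by
  apply Real.sqrt_le_sqrt
  apply Finset.sum_le_sum
  intro j _
  calc a j ^ 2 = |a j| ^ 2 := (sq_abs _).symm
    _ ≤ c j ^ 2 := by exact pow_le_pow_left₀ (abs_nonneg _) (h j) 2

lemma sqrt_sum_sq_add_le {m : ℕ} (a b : Fin m → ℝ) :
    Real.sqrt (∑ j, (a j + b j) ^ 2) ≤ Real.sqrt (∑ j, a j ^ 2) + Real.sqrt (∑ j, b j ^ 2) := by
  have h := norm_add_le ((WithLp.equiv 2 (Fin m → ℝ)).symm a) ((WithLp.equiv 2 (Fin m → ℝ)).symm b)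
  simpa [EuclideanSpace.norm_eq, Real.norm_eq_abs, sq_abs, ← WithLp.toLp_add] using h

lemma sqrt_sum_sq_sum_le {m : ℕ} {ι : Type*} (s : Finset ι) (a : ι → Fin m → ℝ) :
    Real.sqrt (∑ j, (∑ k ∈ s, a k j) ^ 2) ≤ ∑ k ∈ s, Real.sqrt (∑ j, a k j ^ 2) := by
  classical
  induction s using Finset.induction_on with
  | empty => simp
  | insert y s' hx ih =>
      rw [Finset.sum_insert hx]
      calc Real.sqrt (∑ j, (∑ k ∈ insert y s', a k j) ^ 2)
          = Real.sqrt (∑ j, (a y j + ∑ k ∈ s', a k j) ^ 2) := by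
            simp [Finset.sum_insert hx]
        _ ≤ Real.sqrt (∑ j, a y j ^ 2) + Real.sqrt (∑ j, (∑ k ∈ s', a k j) ^ 2) :=
            sqrt_sum_sq_add_le _ _
        _ ≤ _ := add_le_add_right ih _

lemma norm_fcoef_le {d : ℕ} (g : (Fin d → ℝ) → ℝ) (C : ℝ)
    (hm : AEStronglyMeasurable g (volume.restrict (cube d)))
    (hbd : ∀ x, |g x| ≤ C) (k : Fin d → ℤ) :
    ‖fcoef d (fun y => ((g y : ℝ) : ℂ)) k‖ ≤ Real.sqrt (∫ x in cube d, (g x) ^ 2) := by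
  set μ := volume.restrict (cube d) with hμ
  haveI : IsProbabilityMeasure μ := ⟨by rw [hμ, Measure.restrict_apply_univ]; exact volume_cube d⟩
  have step1 : ‖fcoef d (fun y => ((g y : ℝ) : ℂ)) k‖ ≤ ∫ x, |g x| ∂μ := by
    calc ‖∫ x, ((g x : ℂ) * fexp d (-k) x) ∂μ‖ ≤ ∫ x, ‖(g x : ℂ) * fexp d (-k) x‖ ∂μ :=
          norm_integral_le_integral_norm _
      _ = ∫ x, |g x| ∂μ := by
          congr 1; funext x
          have hf := norm_fexp d (-k) x
          rw [norm_mul, hf, mul_one, Complex.norm_real, Real.norm_eq_abs]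
  have hm2 : AEStronglyMeasurable (fun x => |g x|) μ := by
    simpa [Real.norm_eq_abs] using hm.norm
  have hmem : MemLp (fun x => |g x|) (ENNReal.ofReal 2) μ := by
    apply MemLp.of_bound hm2 C
    filter_upwards with x
    simpa [Real.norm_eq_abs, abs_abs] using hbd x
  have hone : MemLp (fun _ : (Fin d → ℝ) => (1 : ℝ)) (ENNReal.ofReal 2) μ := memLp_const 1
  have hpq : (2 : ℝ).HolderConjugate 2 := Real.HolderConjugate.two_two
  have step2 := integral_mul_le_Lp_mul_Lq_of_nonneg hpq
    (f := fun x => |g x|) (g := fun _ => (1:ℝ))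
    (Filter.Eventually.of_forall fun x => abs_nonneg _)
    (Filter.Eventually.of_forall fun x => zero_le_one) hmem hone
  have e1 : ∫ x, |g x| ^ (2:ℝ) ∂μ = ∫ x, g x ^ 2 ∂μ := by
    congr 1; funext x
    rw [show (2:ℝ) = ((2:ℕ):ℝ) by norm_num, Real.rpow_natCast, sq_abs]
  have e2 : (∫ _x : (Fin d → ℝ), (1:ℝ) ^ (2:ℝ) ∂μ) = 1 := by simp [Real.one_rpow]
  rw [e1, e2, Real.one_rpow, mul_one] at step2
  calc ‖fcoef d (fun y => ((g y : ℝ) : ℂ)) k‖ ≤ ∫ x, |g x| ∂μ := step1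
    _ ≤ (∫ x, g x ^ 2 ∂μ) ^ (1/2 : ℝ) := by simpa using step2
    _ = Real.sqrt (∫ x, g x ^ 2 ∂μ) := by rw [Real.sqrt_eq_rpow]

/-- Cauchy–Schwarz bound for the kernel part. -/
lemma kernel_bound {m p : ℕ} {ι : Type*} (s : Finset ι)
    (P : ι → Matrix (Fin m) (Fin p) ℂ) (c : ι → Fin p → ℂ) (e : ι → ℂ)
    (he : ∀ k, ‖e k‖ = 1) (S M : ℝ) (hS0 : 0 ≤ S)
    (hc : ∀ k ∈ s, ∑ j', ‖c k j'‖ ^ 2 ≤ S ^ 2)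
    (hP : Real.sqrt (∑ k ∈ s, ∑ j, ∑ j', ‖P k j j'‖ ^ 2) ≤ M) :
    Real.sqrt (∑ j, ((∑ k ∈ s, (∑ j', P k j j' * c k j') * e k).re) ^ 2)
      ≤ Real.sqrt (s.card : ℝ) * (M * S) := by
  classical
  set F : ι → ℝ := fun k => Real.sqrt (∑ j, ∑ j', ‖P k j j'‖ ^ 2) with hF
  have hzj : ∀ j, |(∑ k ∈ s, (∑ j', P k j j' * c k j') * e k).re|
      ≤ ∑ k ∈ s, ‖∑ j', P k j j' * c k j'‖ := by
    intro j
    calc |(∑ k ∈ s, (∑ j', P k j j' * c k j') * e k).re|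
        ≤ ‖∑ k ∈ s, (∑ j', P k j j' * c k j') * e k‖ := by
          exact Complex.abs_re_le_norm _
      _ ≤ ∑ k ∈ s, ‖(∑ j', P k j j' * c k j') * e k‖ := norm_sum_le _ _
      _ = ∑ k ∈ s, ‖∑ j', P k j j' * c k j'‖ := by
          apply Finset.sum_congr rfl
          intro k _
          rw [norm_mul, he k, mul_one]
  have hwk : ∀ k ∈ s, Real.sqrt (∑ j, ‖∑ j', P k j j' * c k j'‖ ^ 2) ≤ F k * S := by
    intro k hk
    set Sc := Real.sqrt (∑ j', ‖c k j'‖ ^ 2) with hSc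
    have hSc0 : 0 ≤ Sc := Real.sqrt_nonneg _
    have hScS : Sc ≤ S := by
      rw [hSc]
      calc Real.sqrt (∑ j', ‖c k j'‖ ^ 2) ≤ Real.sqrt (S ^ 2) :=
            Real.sqrt_le_sqrt (hc k hk)
        _ = S := Real.sqrt_sq hS0
    have hrow : ∀ j, ‖∑ j', P k j j' * c k j'‖
        ≤ Real.sqrt (∑ j', ‖P k j j'‖ ^ 2) * Sc := by
      intro j
      calc ‖∑ j', P k j j' * c k j'‖ ≤ ∑ j', ‖P k j j'‖ * ‖c k j'‖ :=
            (norm_sum_le _ _).trans (le_of_eq (by simp [norm_mul]))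
        _ ≤ Real.sqrt (∑ j', ‖P k j j'‖ ^ 2) * Real.sqrt (∑ j', ‖c k j'‖ ^ 2) :=
            Real.sum_mul_le_sqrt_mul_sqrt _ _ _
    calc Real.sqrt (∑ j, ‖∑ j', P k j j' * c k j'‖ ^ 2)
          ≤ Real.sqrt (∑ j : Fin m, (Real.sqrt (∑ j', ‖P k j j'‖ ^ 2) * Sc) ^ 2) := by
            apply sqrt_sum_sq_mono
            intro j
            rw [abs_of_nonneg (norm_nonneg _)]
            exact hrow j
        _ = F k * Sc := by
            have hterm : ∀ j : Fin m, (Real.sqrt (∑ j', ‖P k j j'‖ ^ 2) * Sc) ^ 2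
                = (∑ j', ‖P k j j'‖ ^ 2) * Sc ^ 2 := by
              intro j
              rw [mul_pow, Real.sq_sqrt (Finset.sum_nonneg fun _ _ => sq_nonneg _)]
            rw [Finset.sum_congr rfl fun j _ => hterm j, ← Finset.sum_mul,
              Real.sqrt_mul (Finset.sum_nonneg fun _ _ =>
                Finset.sum_nonneg fun _ _ => sq_nonneg _), Real.sqrt_sq hSc0]
        _ ≤ F k * S := mul_le_mul_of_nonneg_left hScS (Real.sqrt_nonneg _)
  have hsumF : ∑ k ∈ s, F k ≤ Real.sqrt (s.card : ℝ) * M := by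
    have h1 : ∑ k ∈ s, F k ≤ Real.sqrt (s.card : ℝ) * Real.sqrt (∑ k ∈ s, F k ^ 2) := by
      have h := Real.sum_mul_le_sqrt_mul_sqrt s (fun _ => (1:ℝ)) F
      simpa using h
    have h2 : Real.sqrt (∑ k ∈ s, F k ^ 2) ≤ M := by
      have hterm : ∀ k ∈ s, F k ^ 2 = ∑ j, ∑ j', ‖P k j j'‖ ^ 2 := by
        intro k _
        exact Real.sq_sqrt (Finset.sum_nonneg fun _ _ =>
          Finset.sum_nonneg fun _ _ => sq_nonneg _)
      rw [Finset.sum_congr rfl hterm]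
      exact hP
    calc ∑ k ∈ s, F k ≤ Real.sqrt (s.card : ℝ) * Real.sqrt (∑ k ∈ s, F k ^ 2) := h1
      _ ≤ Real.sqrt (s.card : ℝ) * M :=
          mul_le_mul_of_nonneg_left h2 (Real.sqrt_nonneg _)
  calc Real.sqrt (∑ j, ((∑ k ∈ s, (∑ j', P k j j' * c k j') * e k).re) ^ 2)
      ≤ Real.sqrt (∑ j, (∑ k ∈ s, ‖∑ j', P k j j' * c k j'‖) ^ 2) :=
        sqrt_sum_sq_mono fun j => hzj j
    _ ≤ ∑ k ∈ s, Real.sqrt (∑ j, ‖∑ j', P k j j' * c k j'‖ ^ 2) :=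
        sqrt_sum_sq_sum_le s _
    _ ≤ ∑ k ∈ s, F k * S := Finset.sum_le_sum hwk
    _ = (∑ k ∈ s, F k) * S := (Finset.sum_mul _ _ _).symm
    _ ≤ (Real.sqrt (s.card : ℝ) * M) * S := mul_le_mul_of_nonneg_right hsumF hS0
    _ = Real.sqrt (s.card : ℝ) * (M * S) := mul_assoc _ _ _

/-- Lipschitz post-composition bound. -/
lemma sigma_bound {m : ℕ} (σ : ℝ → ℝ) (B : ℝ) (hB0 : 0 ≤ B)
    (hlip : ∀ t, |σ t - σ 0| ≤ B * |t|) (z : Fin m → ℝ) (R : ℝ)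
    (hz : Real.sqrt (∑ j, z j ^ 2) ≤ R) :
    Real.sqrt (∑ j, (σ (z j)) ^ 2)
      ≤ Real.sqrt (∑ _j : Fin m, (σ 0) ^ 2) + B * R := by
  have hR0 : 0 ≤ R := (Real.sqrt_nonneg _).trans hz
  calc Real.sqrt (∑ j, (σ (z j)) ^ 2)
      = Real.sqrt (∑ j, ((σ 0) + (σ (z j) - σ 0)) ^ 2) := by
        congr 1; apply Finset.sum_congr rfl; intro j _; ring_nf
    _ ≤ Real.sqrt (∑ _j : Fin m, (σ 0) ^ 2)
        + Real.sqrt (∑ j, (σ (z j) - σ 0) ^ 2) := sqrt_sum_sq_add_le _ _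
    _ ≤ Real.sqrt (∑ _j : Fin m, (σ 0) ^ 2) + B * R := by
        apply add_le_add_right
        calc Real.sqrt (∑ j, (σ (z j) - σ 0) ^ 2)
            ≤ Real.sqrt (∑ j, (B * |z j|) ^ 2) :=
              sqrt_sum_sq_mono fun j => hlip (z j)
          _ = B * Real.sqrt (∑ j, z j ^ 2) := by
              have hterm : ∀ j : Fin m, (B * |z j|) ^ 2 = B ^ 2 * z j ^ 2 := by
                intro j; rw [mul_pow, sq_abs]
              rw [Finset.sum_congr rfl fun j _ => hterm j, ← Finset.mul_sum,
                Real.sqrt_mul (sq_nonneg _), Real.sqrt_sq hB0]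
          _ ≤ B * R := mul_le_mul_of_nonneg_left hz hB0

/-- Sup-norm stability of an FNO layer: with `σ` a `B`-Lipschitz (componentwise) activation,
`‖W‖₂ ≤ M`, `|b| ≤ M`, Fourier kernel weights with total Frobenius norm `≤ M`, the layer
output `v' = σ(Wv + Kv + b)` satisfies, pointwise,
`|v'(x)| ≤ σ* + B M (1 + ‖v‖_∞ + K^{d/2} ‖v‖_{L²(T^d)})` with `σ* = max{|σ(0)|, 1}`. -/
theorem fno_layer_sup_bound (d K p m : ℕ) (hd : 0 < d) (hK : 1 ≤ K)
    (B M : ℝ) (hB : 1 ≤ B) (hM : 1 ≤ M)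
    (σ : ℝ → ℝ) (hσ : LipschitzWith (Real.toNNReal B) σ)
    (W : Matrix (Fin m) (Fin p) ℝ) (b : Fin m → ℝ)
    (P : (Fin d → ℤ) → Matrix (Fin m) (Fin p) ℂ)
    (hW : ∀ y : Fin p → ℝ,
      Real.sqrt (∑ j, (W.mulVec y j) ^ 2) ≤ M * Real.sqrt (∑ j', (y j') ^ 2))
    (hb : Real.sqrt (∑ j, (b j) ^ 2) ≤ M)
    (hP : Real.sqrt (∑ k ∈ symmPi d K, ∑ j, ∑ j', ‖P k j j'‖ ^ 2) ≤ M)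
    (v : (Fin d → ℝ) → Fin p → ℝ) (Vinf : ℝ)
    (hmeas : ∀ j', AEStronglyMeasurable (fun x => v x j') (volume.restrict (cube d)))
    (hV : ∀ x, Real.sqrt (∑ j', (v x j') ^ 2) ≤ Vinf) :
    ∀ x, Real.sqrt (∑ j, (σ (W.mulVec (v x) j
          + (∑ k ∈ symmPi d K, (∑ j', P k j j' *
              fcoef d (fun y => ((v y j' : ℝ) : ℂ)) k) * fexp d k x).re
          + b j)) ^ 2)
      ≤ max (Real.sqrt (∑ _j : Fin m, (σ 0) ^ 2)) 1
        + B * M * (1 + Vinf + (K : ℝ) ^ ((d : ℝ) / 2)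
            * Real.sqrt (∫ x in cube d, ∑ j', (v x j') ^ 2)) := by
  intro x
  have hB0 : (0:ℝ) ≤ B := zero_le_one.trans hB
  have hM0 : (0:ℝ) ≤ M := zero_le_one.trans hM
  have hV0 : (0:ℝ) ≤ Vinf := (Real.sqrt_nonneg _).trans (hV x)
  set S := Real.sqrt (∫ y in cube d, ∑ j', (v y j') ^ 2) with hSdef
  have hS0 : 0 ≤ S := Real.sqrt_nonneg _
  haveI : IsProbabilityMeasure (volume.restrict (cube d)) :=
    ⟨by rw [Measure.restrict_apply_univ]; exact volume_cube d⟩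
  -- componentwise bound on v
  have hvj : ∀ y j', |v y j'| ≤ Vinf := by
    intro y j'
    rw [← Real.sqrt_sq_eq_abs]
    refine le_trans (Real.sqrt_le_sqrt ?_) (hV y)
    exact Finset.single_le_sum (f := fun j' => (v y j') ^ 2)
      (fun i _ => sq_nonneg _) (Finset.mem_univ j')
  -- integrability of component squares
  have hint : ∀ j', Integrable (fun y => (v y j') ^ 2) (volume.restrict (cube d)) := by
    intro j'
    have asm : AEStronglyMeasurable (fun y => (v y j') ^ 2) (volume.restrict (cube d)) := by
      exact (hmeas j').pow 2
    refine memLp_one_iff_integrable.mp (MemLp.of_bound asm (Vinf ^ 2) ?_)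
    filter_upwards with y
    rw [Real.norm_eq_abs, abs_of_nonneg (sq_nonneg _)]
    calc (v y j') ^ 2 = |v y j'| ^ 2 := (sq_abs _).symm
      _ ≤ Vinf ^ 2 := pow_le_pow_left₀ (abs_nonneg _) (hvj y j') 2
  -- L² bound for Fourier coefficients
  have hcsq : ∀ k ∈ symmPi d K,
      ∑ j', ‖fcoef d (fun y => ((v y j' : ℝ) : ℂ)) k‖ ^ 2 ≤ S ^ 2 := by
    intro k _
    have h1 : ∀ j', ‖fcoef d (fun y => ((v y j' : ℝ) : ℂ)) k‖ ^ 2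
        ≤ ∫ y in cube d, (v y j') ^ 2 := by
      intro j'
      have h := norm_fcoef_le (fun y => v y j') Vinf (hmeas j') (fun y => hvj y j') k
      calc ‖fcoef d (fun y => ((v y j' : ℝ) : ℂ)) k‖ ^ 2
          ≤ (Real.sqrt (∫ y in cube d, (v y j') ^ 2)) ^ 2 :=
            pow_le_pow_left₀ (norm_nonneg _) h 2
        _ = ∫ y in cube d, (v y j') ^ 2 :=
            Real.sq_sqrt (integral_nonneg fun y => sq_nonneg _)
    calc ∑ j', ‖fcoef d (fun y => ((v y j' : ℝ) : ℂ)) k‖ ^ 2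
        ≤ ∑ j', ∫ y in cube d, (v y j') ^ 2 := Finset.sum_le_sum fun j' _ => h1 j'
      _ = ∫ y in cube d, ∑ j', (v y j') ^ 2 :=
          (integral_finset_sum Finset.univ fun j' _ => hint j').symm
      _ = S ^ 2 := (Real.sq_sqrt (integral_nonneg fun y =>
          Finset.sum_nonneg fun _ _ => sq_nonneg _)).symm
  -- kernel part bound
  have hker := kernel_bound (symmPi d K) P
    (fun k j' => fcoef d (fun y => ((v y j' : ℝ) : ℂ)) k)
    (fun k => fexp d k x) (fun k => norm_fexp d k x) S M hS0 hcsq hP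
  have hcard : Real.sqrt ((symmPi d K).card : ℝ) = (K : ℝ) ^ ((d : ℝ) / 2) := by
    rw [card_symmPi d K hK,
      show ((K ^ d : ℕ) : ℝ) = (K : ℝ) ^ (d : ℕ) by push_cast; ring,
      Real.sqrt_eq_rpow, ← Real.rpow_natCast (K : ℝ) d,
      ← Real.rpow_mul (Nat.cast_nonneg K)]
    congr 1
    ring
  rw [hcard] at hker
  -- W term
  have hWx : Real.sqrt (∑ j, (W.mulVec (v x) j) ^ 2) ≤ M * Vinf :=
    (hW (v x)).trans (mul_le_mul_of_nonneg_left (hV x) hM0)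
  -- total pre-activation bound
  have key : Real.sqrt (∑ j, (W.mulVec (v x) j
        + (∑ k ∈ symmPi d K, (∑ j', P k j j' *
            fcoef d (fun y => ((v y j' : ℝ) : ℂ)) k) * fexp d k x).re
        + b j) ^ 2)
      ≤ M * (1 + Vinf + (K : ℝ) ^ ((d : ℝ) / 2) * S) := by
    calc Real.sqrt (∑ j, (W.mulVec (v x) j
          + (∑ k ∈ symmPi d K, (∑ j', P k j j' *
              fcoef d (fun y => ((v y j' : ℝ) : ℂ)) k) * fexp d k x).re
          + b j) ^ 2)
        ≤ Real.sqrt (∑ j, (W.mulVec (v x) j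
            + (∑ k ∈ symmPi d K, (∑ j', P k j j' *
                fcoef d (fun y => ((v y j' : ℝ) : ℂ)) k) * fexp d k x).re) ^ 2)
          + Real.sqrt (∑ j, (b j) ^ 2) := sqrt_sum_sq_add_le _ _
      _ ≤ (Real.sqrt (∑ j, (W.mulVec (v x) j) ^ 2)
            + Real.sqrt (∑ j, ((∑ k ∈ symmPi d K, (∑ j', P k j j' *
                fcoef d (fun y => ((v y j' : ℝ) : ℂ)) k) * fexp d k x).re) ^ 2))
          + Real.sqrt (∑ j, (b j) ^ 2) :=
          add_le_add_left (sqrt_sum_sq_add_le _ _) _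
      _ ≤ (M * Vinf + (K : ℝ) ^ ((d : ℝ) / 2) * (M * S)) + M :=
          add_le_add (add_le_add hWx hker) hb
      _ = M * (1 + Vinf + (K : ℝ) ^ ((d : ℝ) / 2) * S) := by ring
  -- Lipschitz bound on the activation
  have hlip : ∀ t : ℝ, |σ t - σ 0| ≤ B * |t| := by
    intro t
    have h := hσ.dist_le_mul t 0
    rw [Real.dist_eq, Real.dist_eq, sub_zero, Real.coe_toNNReal B hB0] at h
    exact h
  calc Real.sqrt (∑ j, (σ (W.mulVec (v x) j
          + (∑ k ∈ symmPi d K, (∑ j', P k j j' *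
              fcoef d (fun y => ((v y j' : ℝ) : ℂ)) k) * fexp d k x).re
          + b j)) ^ 2)
      ≤ Real.sqrt (∑ _j : Fin m, (σ 0) ^ 2)
        + B * (M * (1 + Vinf + (K : ℝ) ^ ((d : ℝ) / 2) * S)) :=
        sigma_bound σ B hB0 hlip _ _ key
    _ = Real.sqrt (∑ _j : Fin m, (σ 0) ^ 2)
        + B * M * (1 + Vinf + (K : ℝ) ^ ((d : ℝ) / 2) * S) := by ring
    _ ≤ max (Real.sqrt (∑ _j : Fin m, (σ 0) ^ 2)) 1
        + B * M * (1 + Vinf + (K : ℝ) ^ ((d : ℝ) / 2) * S) :=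
        add_le_add_left (le_max_left _ _) _

end
end
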